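/- arXiv:0909.3968 — 3 statements merged into one kernel-verified Lean document; each statement's English description precedes it below -/
import Mathlib

section
/- Let p be a prime and let n ≥ 1, k ≥ 1, j ≥ n be integers such that (p−1)·p^{n−1} divides 2k. Then for every integer r ≥ 1, σ_{j+2k}(r) ≡ σ_j(r) (mod p^n). -/
/-- Let `p` be a prime and `n ≥ 1`, `k ≥ 1`, `j ≥ n` be integers with
`(p−1)·p^(n−1) ∣ 2k`. Then for every `r ≥ 1`, `σ_{j+2k}(r) ≡ σ_j(r) (mod p^n)`. -/
theorem sigma_modeq_of_dvd (p n k j : ℕ) (hp : p.Prime) (hn : 1 ≤ n) (hk : 1 ≤ k)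
    (hj : n ≤ j) (hdvd : (p - 1) * p ^ (n - 1) ∣ 2 * k) (r : ℕ) (hr : 1 ≤ r) :
    (∑ d ∈ r.divisors, d ^ (j + 2 * k)) ≡ (∑ d ∈ r.divisors, d ^ j) [MOD p ^ n] := by
  have key : ∀ d ∈ r.divisors, d ^ (j + 2 * k) ≡ d ^ j [MOD p ^ n] := by
    intro d _
    by_cases hpd : p ∣ d
    · have h1 : p ^ n ∣ d ^ j := dvd_trans (pow_dvd_pow_of_dvd hpd n) (pow_dvd_pow d hj)
      have h2 : p ^ n ∣ d ^ (j + 2 * k) :=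
        dvd_trans h1 (pow_dvd_pow d (Nat.le_add_right _ _))
      exact ((Nat.modEq_zero_iff_dvd).mpr h2).trans ((Nat.modEq_zero_iff_dvd).mpr h1).symm
    · have hcop : d.Coprime (p ^ n) :=
        Nat.Coprime.pow_right n (Nat.coprime_comm.mp (hp.coprime_iff_not_dvd.mpr hpd))
      have htot : (p ^ n).totient = p ^ (n - 1) * (p - 1) := by
        rw [Nat.totient_prime_pow hp hn]
      have hdvd' : (p ^ n).totient ∣ 2 * k := by
        rw [htot, mul_comm]; exact hdvd
      obtain ⟨c, hc⟩ := hdvd'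
      have h1 : d ^ (2 * k) ≡ 1 [MOD p ^ n] := by
        calc d ^ (2 * k) = (d ^ (p ^ n).totient) ^ c := by rw [← pow_mul, ← hc]
          _ ≡ 1 ^ c [MOD p ^ n] := (Nat.ModEq.pow_totient hcop).pow c
          _ = 1 := one_pow c
      calc d ^ (j + 2 * k) = d ^ j * d ^ (2 * k) := by rw [pow_add]
        _ ≡ d ^ j * 1 [MOD p ^ n] := (Nat.ModEq.refl _).mul h1
        _ = d ^ j := mul_one _
  unfold Nat.ModEq
  rw [Finset.sum_nat_mod, Finset.sum_nat_mod _ _ (fun d => d ^ j)]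
  congr 1
  exact Finset.sum_congr rfl fun d hd => key d hd
end

section
/- Let n ≥ 1 be an integer, let t be an odd positive integer, and let j ≥ n + 2 be an integer. Then for every integer r ≥ 1, σ_{j + t·2^n}(r) ≡ σ_j(r) (mod 2^{n+2}). -/
lemma aux_two_adic (n : ℕ) (hn : 1 ≤ n) (d : ℕ) (hd : Odd d) :
    d ^ (2 ^ n) ≡ 1 [MOD 2 ^ (n + 2)] := by
  have key : ∀ m : ℕ, 1 ≤ m → ((2 : ℤ) ^ (m + 2)) ∣ (d : ℤ) ^ (2 ^ m) - 1 := by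
    intro m hm
    induction m, hm using Nat.le_induction with
    | base =>
      obtain ⟨k, hk⟩ := hd
      have hk' : (d : ℤ) = 2 * k + 1 := by exact_mod_cast hk
      have : (d : ℤ) ^ (2 ^ 1) - 1 = 4 * ((k : ℤ) * (k + 1)) := by rw [hk']; ring
      rw [this]
      obtain ⟨e, he⟩ := Int.even_mul_succ_self (k : ℤ)
      rw [he]
      exact ⟨e, by ring⟩
    | succ m hm ih =>
      obtain ⟨c, hc⟩ := ih
      have hodd : Odd ((d : ℤ) ^ (2 ^ m)) := (Int.odd_coe_nat d |>.mpr hd).pow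
      obtain ⟨e, he⟩ := hodd
      have : (d : ℤ) ^ (2 ^ (m + 1)) - 1 =
          ((d : ℤ) ^ (2 ^ m) - 1) * ((d : ℤ) ^ (2 ^ m) + 1) := by
        rw [pow_succ, pow_mul]; ring
      rw [this, hc, he]
      exact ⟨c * (e + 1), by ring⟩
  have h := key n hn
  have : ((2 : ℕ) ^ (n + 2) : ℤ) ∣ ((1 : ℕ) : ℤ) - ((d ^ (2 ^ n) : ℕ) : ℤ) := by
    push_cast
    have h2 := dvd_neg.mpr h
    rw [neg_sub] at h2
    exact h2
  exact Int.natCast_modEq_iff.mp (Int.modEq_iff_dvd.mpr (by exact_mod_cast this))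

/-- Let `n ≥ 1`, let `t` be an odd positive integer, and let `j ≥ n + 2`. Then for
every `r ≥ 1`, `σ_{j+t·2^n}(r) ≡ σ_j(r) (mod 2^(n+2))`. -/
theorem sigma_modeq_two_adic (n t j : ℕ) (hn : 1 ≤ n) (ht : Odd t) (ht' : 0 < t)
    (hj : n + 2 ≤ j) (r : ℕ) (hr : 1 ≤ r) :
    (∑ d ∈ r.divisors, d ^ (j + t * 2 ^ n)) ≡
      (∑ d ∈ r.divisors, d ^ j) [MOD 2 ^ (n + 2)] := by
  rw [← ZMod.natCast_eq_natCast_iff]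
  push_cast
  refine Finset.sum_congr rfl fun d _ => ?_
  rcases Nat.even_or_odd d with hd | hd
  · -- even case: both are 0 mod 2^(n+2)
    have h1 : 2 ^ (n + 2) ∣ d ^ j :=
      dvd_trans (pow_dvd_pow 2 hj) (pow_dvd_pow_of_dvd hd.two_dvd j)
    have h2 : 2 ^ (n + 2) ∣ d ^ (j + t * 2 ^ n) :=
      h1.trans (pow_dvd_pow d (Nat.le_add_right _ _))
    have e1 : ((d : ZMod (2 ^ (n + 2))) ^ j) = 0 := by
      rw [← Nat.cast_pow, ZMod.natCast_eq_zero_iff]; exact h1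
    have e2 : ((d : ZMod (2 ^ (n + 2))) ^ (j + t * 2 ^ n)) = 0 := by
      rw [← Nat.cast_pow, ZMod.natCast_eq_zero_iff]; exact h2
    rw [e1, e2]
  · have h := (aux_two_adic n hn d hd).pow t
    have h1 : ((d : ZMod (2 ^ (n + 2))) ^ (2 ^ n)) ^ t = 1 := by
      have := (ZMod.natCast_eq_natCast_iff _ _ _).mpr h
      push_cast at this
      simpa using this
    calc (d : ZMod (2 ^ (n + 2))) ^ (j + t * 2 ^ n)
        = (d : ZMod (2 ^ (n + 2))) ^ j * ((d : ZMod (2 ^ (n + 2))) ^ (2 ^ n)) ^ t := by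
          rw [← pow_mul, ← pow_add]; congr 1; ring
      _ = (d : ZMod (2 ^ (n + 2))) ^ j := by rw [h1, mul_one]
end

section
/- Let m ≥ 0 and a ≥ 0 be integers, set k = (2a+1)·2^{m+1}, and let k' ≥ k be an integer with (k, k') ≠ (2, 2). Then for every integer r ≥ 1, 2^{m+4} divides σ_{2k'−1+2k}(r) − σ_{2k'−1}(r). -/
lemma two_pow_aux (n : ℕ) : 2 * n + 4 ≤ 2 ^ (n + 2) := by
  induction n with
  | zero => norm_num
  | succ n ih => rw [pow_succ]; omega

lemma odd_pow_two_pow (d : ℤ) (hd : Odd d) (n : ℕ) :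
    (2 : ℤ) ^ (n + 3) ∣ d ^ (2 ^ (n + 1)) - 1 := by
  induction n with
  | zero =>
    obtain ⟨j, rfl⟩ := hd
    have h : (2 * j + 1) ^ (2 ^ 1) - 1 = 4 * (j * (j + 1)) := by ring
    rw [h]
    rcases Int.even_or_odd j with he | ho
    · obtain ⟨i, rfl⟩ := he
      exact ⟨i * (2 * i + 1), by ring⟩
    · obtain ⟨i, rfl⟩ := ho
      exact ⟨(2 * i + 1) * (i + 1), by ring⟩
  | succ n ih =>
    have h1 : d ^ (2 ^ (n + 2)) - 1
        = (d ^ (2 ^ (n + 1)) - 1) * (d ^ (2 ^ (n + 1)) + 1) := by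
      have h2 : d ^ (2 ^ (n + 2)) = (d ^ (2 ^ (n + 1))) ^ 2 := by
        rw [← pow_mul, ← pow_succ]
      rw [h2]; ring
    rw [h1, show n + 1 + 3 = (n + 3) + 1 from rfl, pow_succ]
    exact mul_dvd_mul ih ((hd.pow.add_one).two_dvd)

/-- Let `m ≥ 0` and `a ≥ 0` be integers, set `k = (2a+1)·2^(m+1)`, and let
`k' ≥ k` with `(k, k') ≠ (2, 2)`. Then for every `r ≥ 1`,
`2^(m+4)` divides `σ_{2k'−1+2k}(r) − σ_{2k'−1}(r)`. -/
theorem pow_dvd_sigma_sub_sigma_two_adic (m a k k' : ℕ)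
    (hk : k = (2 * a + 1) * 2 ^ (m + 1)) (hk' : k ≤ k') (hne : (k, k') ≠ (2, 2))
    (r : ℕ) (hr : 1 ≤ r) :
    (2 : ℤ) ^ (m + 4) ∣ (∑ d ∈ r.divisors, (d : ℤ) ^ (2 * k' - 1 + 2 * k)) -
      (∑ d ∈ r.divisors, (d : ℤ) ^ (2 * k' - 1)) := by
  have hpow2 : 2 ≤ 2 ^ (m + 1) := by
    calc 2 = 2 ^ 1 := rfl
    _ ≤ 2 ^ (m + 1) := Nat.pow_le_pow_right (by norm_num) (by omega)
  have hk2 : 2 ≤ k := by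
    calc 2 ≤ 2 ^ (m + 1) := hpow2
    _ ≤ (2 * a + 1) * 2 ^ (m + 1) := Nat.le_mul_of_pos_left _ (by omega)
    _ = k := hk.symm
  have h2k : 2 * k = (2 * a + 1) * 2 ^ (m + 2) := by
    rw [hk, pow_succ]; ring
  have hE : m + 5 ≤ 2 * k' := by
    rcases Nat.eq_zero_or_pos m with hm | hm
    · subst hm
      rcases Nat.eq_zero_or_pos a with ha | ha
      · subst ha
        norm_num at hk
        have hne2 : k' ≠ 2 := fun h => hne (by simp [hk, h])
        omega
      · norm_num at hk; omega
    · have h1 := two_pow_aux m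
      have h2 : 2 ^ (m + 2) ≤ 2 * k := by
        rw [h2k]
        exact Nat.le_mul_of_pos_left _ (by omega)
      omega
  rw [← Finset.sum_sub_distrib]
  apply Finset.dvd_sum
  intro d hd
  have hterm : (d : ℤ) ^ (2 * k' - 1 + 2 * k) - (d : ℤ) ^ (2 * k' - 1)
      = (d : ℤ) ^ (2 * k' - 1) * ((d : ℤ) ^ (2 * k) - 1) := by
    rw [pow_add]; ring
  rw [hterm]
  rcases Nat.even_or_odd d with he | ho
  · apply Dvd.dvd.mul_right
    have h2d : (2 : ℤ) ∣ (d : ℤ) := by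
      exact_mod_cast he.two_dvd
    calc (2 : ℤ) ^ (m + 4) ∣ (2 : ℤ) ^ (2 * k' - 1) :=
          pow_dvd_pow 2 (by omega)
    _ ∣ (d : ℤ) ^ (2 * k' - 1) := pow_dvd_pow_of_dvd h2d _
  · apply Dvd.dvd.mul_left
    have hodd : Odd (d : ℤ) := by exact_mod_cast ho
    have h1 : (2 : ℤ) ^ (m + 4) ∣ (d : ℤ) ^ (2 ^ (m + 2)) - 1 := by
      have := odd_pow_two_pow (d : ℤ) hodd (m + 1)
      simpa [show m + 1 + 3 = m + 4 from rfl] using this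
    have h2 : (d : ℤ) ^ (2 * k) - 1
        = ((d : ℤ) ^ (2 ^ (m + 2))) ^ (2 * a + 1) - 1 ^ (2 * a + 1) := by
      rw [← pow_mul, h2k, one_pow, mul_comm]
    rw [h2]
    exact h1.trans (sub_dvd_pow_sub_pow ((d : ℤ) ^ (2 ^ (m + 2))) 1 (2 * a + 1))
end
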